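/- Let X be a reflexive real Banach space, Y a real normed space, and T, A : X → Y compact linear operators such that M_T = D ∪ (−D), where D is a nonempty compact connected subset of the unit sphere S_X, and suppose moreover M_T ⊆ M_A. Let ε ∈ [0,1). Then T ⊥_B^ε A if and only if there exists x ∈ M_T such that Tx ⊥_B^ε Ax, i.e., ‖Tx + λAx‖² ≥ ‖Tx‖² − 2ε‖Tx‖‖λAx‖ for all real λ. -/

import Mathlib

set_option maxHeartbeats 4000000

open Filter Metric NormedSpace Topology

section auxiliary
variable {X Y : Type*} [NormedAddCommGroup X] [NormedSpace ℝ X]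
  [NormedAddCommGroup Y] [NormedSpace ℝ Y]

/-- In a reflexive space, limits of images of points of the closed unit ball are attained. -/
lemma exists_preimage_of_reflexive {Z : Type*} [NormedAddCommGroup Z] [NormedSpace ℝ Z]
    (hrefl : Function.Surjective (NormedSpace.inclusionInDoubleDual ℝ X))
    (S : X →L[ℝ] Z) (x : ℕ → X) (hx : ∀ n, ‖x n‖ ≤ 1) {w : Z}
    (hconv : Tendsto (fun n => S (x n)) atTop (𝓝 w)) :
    ∃ x₀ : X, ‖x₀‖ ≤ 1 ∧ S x₀ = w := by
  set J := NormedSpace.inclusionInDoubleDual ℝ X with hJ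
  have hJnorm : ∀ y : X, ‖J y‖ = ‖y‖ := fun y =>
    (NormedSpace.inclusionInDoubleDualLi ℝ (E := X)).norm_map y
  set u : ℕ → WeakDual ℝ (StrongDual ℝ X) := fun n => StrongDual.toWeakDual (J (x n)) with hu
  have hmem : ∀ n, u n ∈ WeakDual.toStrongDual ⁻¹' closedBall (0 : StrongDual ℝ (StrongDual ℝ X)) 1 := by
    intro n
    simp only [Set.mem_preimage, mem_closedBall, dist_zero_right, hu]
    rw [dist_zero_right (WeakDual.toStrongDual (StrongDual.toWeakDual (J (x n))))]
    show ‖WeakDual.toStrongDual (StrongDual.toWeakDual (J (x n)))‖ ≤ 1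
    rw [show WeakDual.toStrongDual (StrongDual.toWeakDual (J (x n))) = J (x n) from
      LinearEquiv.symm_apply_apply _ _]
    rw [hJnorm]; exact hx n
  obtain ⟨Λ, hΛmem, hΛ⟩ := (WeakDual.isCompact_closedBall (𝕜 := ℝ) (0 : StrongDual ℝ (StrongDual ℝ X)) 1).exists_mapClusterPt
      (f := atTop) (u := u) (le_principal_iff.mpr (Filter.mem_map.mpr (Filter.univ_mem' hmem)))
  obtain ⟨x₀, hx₀⟩ := hrefl (WeakDual.toStrongDual Λ)
  refine ⟨x₀, ?_, ?_⟩
  · rw [← hJnorm, hx₀]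
    simpa [dist_zero_right] using hΛmem
  · rw [NormedSpace.eq_iff_forall_dual_eq ℝ]
    intro g
    have hcont : Continuous fun Λ' : WeakDual ℝ (StrongDual ℝ X) => Λ' (g.comp S) :=
      WeakDual.eval_continuous _
    have h1 : MapClusterPt (Λ (g.comp S)) atTop ((fun Λ' : WeakDual ℝ (StrongDual ℝ X) => Λ' (g.comp S)) ∘ u) :=
      hΛ.continuousAt_comp hcont.continuousAt
    have heq : ((fun Λ' : WeakDual ℝ (StrongDual ℝ X) => Λ' (g.comp S)) ∘ u) = fun n => g (S (x n)) := by
      funext n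
      show (J (x n)) (g.comp S) = g (S (x n))
      rw [hJ, NormedSpace.dual_def]
      rfl
    have h2 : Tendsto (fun n => g (S (x n))) atTop (𝓝 (g w)) :=
      (g.continuous.tendsto w).comp hconv
    have h3 : Λ (g.comp S) = g w := by
      refine eq_of_nhds_neBot (Filter.NeBot.mono ?_ (inf_le_inf le_rfl h2))
      rw [heq] at h1
      exact h1
    have h4 : Λ (g.comp S) = g (S x₀) := by
      have : WeakDual.toStrongDual Λ (g.comp S) = Λ (g.comp S) := rfl
      rw [← this, ← hx₀, hJ, NormedSpace.dual_def]
      rfl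
    rw [← h4, h3]

lemma isCompactOperator_prod' {T A : X →L[ℝ] Y} (hT : IsCompactOperator T)
    (hA : IsCompactOperator A) : IsCompactOperator ⇑(T.prod A) := by
  obtain ⟨K1, hK1, h1⟩ := hT
  obtain ⟨K2, hK2, h2⟩ := hA
  refine ⟨K1 ×ˢ K2, hK1.prod hK2, ?_⟩
  refine Filter.mem_of_superset (Filter.inter_mem h1 h2) ?_
  rintro x ⟨hx1, hx2⟩
  exact ⟨hx1, hx2⟩

lemma compact_subseq {Z : Type*} [NormedAddCommGroup Z] [NormedSpace ℝ Z] {S : X →L[ℝ] Z} (hS : IsCompactOperator ⇑S)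
    (x : ℕ → X) (hx : ∀ n, ‖x n‖ ≤ 1) :
    ∃ w : Z, ∃ φ : ℕ → ℕ, StrictMono φ ∧
      Tendsto (fun k => S (x (φ k))) atTop (𝓝 w) := by
  obtain ⟨K, hK, hKsub⟩ :=
    IsCompactOperator.image_closedBall_subset_compact (𝕜₁ := ℝ)
      (f := (S : X →ₗ[ℝ] Z)) hS 1
  have hmem : ∀ n, S (x n) ∈ K := fun n =>
    hKsub ⟨x n, by simpa [dist_zero_right] using hx n, rfl⟩
  obtain ⟨w, _, φ, hφ, hconv⟩ := hK.tendsto_subseq hmem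
  exact ⟨w, φ, hφ, hconv⟩

lemma key_lemma
    (hrefl : Function.Surjective (NormedSpace.inclusionInDoubleDual ℝ X))
    (T A : X →L[ℝ] Y) (hT : IsCompactOperator ⇑T) (hA : IsCompactOperator ⇑A)
    (ε : ℝ) (hε0 : 0 ≤ ε)
    (horth : ∀ l : ℝ, ‖T + l • A‖ ^ 2 ≥ ‖T‖ ^ 2 - 2 * ε * ‖T‖ * ‖l • A‖)
    (hTpos : 0 < ‖T‖) :
    ∃ x : X, ‖x‖ ≤ 1 ∧ ‖T x‖ = ‖T‖ ∧
      ∀ s : ℝ, 0 ≤ s → ‖T x + s • A x‖ ^ 2 ≥ ‖T‖ ^ 2 - 2 * ε * ‖T‖ * (s * ‖A‖) := by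
  classical
  set C1 : ℝ := 2 * ε * ‖T‖ * ‖A‖ with hC1def
  set C2 : ℝ := 2 * (‖T‖ + ‖A‖) + 1 with hC2def
  have hC1 : 0 ≤ C1 := by positivity
  have hC2 : 0 ≤ C2 := by positivity
  set t : ℕ → ℝ := fun n => 1 / (n + 1) with htdef
  have ht0 : ∀ n, 0 < t n := fun n => by positivity
  have htle1 : ∀ n, t n ≤ 1 := by
    intro n
    rw [htdef]
    rw [div_le_one (by positivity)]
    simp
  have htlim : Tendsto t atTop (𝓝 0) := tendsto_one_div_add_atTop_nhds_zero_nat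
  set B : ℕ → (X →L[ℝ] Y) := fun n => T + t n • A with hBdef
  have hBx : ∀ n (v : X), B n v = T v + t n • A v := by
    intro n v
    simp [hBdef]
  have hchoice : ∀ n : ℕ, ∃ v : X, ‖v‖ < 1 ∧ ‖B n‖ - (t n) ^ 2 < ‖B n v‖ := by
    intro n
    exact (B n).exists_lt_apply_of_lt_opNorm (by nlinarith [sq_nonneg (t n), ht0 n])
  choose x hx1 hx2 using hchoice
  have hx1' : ∀ n, ‖x n‖ ≤ 1 := fun n => (hx1 n).le
  have hBle : ∀ n, ‖B n‖ ≤ ‖T‖ + ‖A‖ := by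
    intro n
    refine le_trans (norm_add_le _ _) ?_
    have : ‖t n • A‖ = t n * ‖A‖ := by
      rw [norm_smul (t n) A, Real.norm_eq_abs, abs_of_pos (ht0 n)]
    rw [this]
    nlinarith [htle1 n, ht0 n, norm_nonneg A]
  have horth' : ∀ n, ‖B n‖ ^ 2 ≥ ‖T‖ ^ 2 - C1 * t n := by
    intro n
    have h := horth (t n)
    have : ‖t n • A‖ = t n * ‖A‖ := by
      rw [norm_smul (t n) A, Real.norm_eq_abs, abs_of_pos (ht0 n)]
    rw [this] at h
    rw [hC1def]
    nlinarith [h]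
  have hstar : ∀ n, ‖B n (x n)‖ ^ 2 ≥ ‖T‖ ^ 2 - C1 * t n - C2 * (t n) ^ 2 := by
    intro n
    rcases le_or_gt ((t n) ^ 2) ‖B n‖ with hcase | hcase
    · have h1 : 0 ≤ ‖B n‖ - (t n) ^ 2 := by linarith
      have h2 : (‖B n‖ - (t n) ^ 2) ^ 2 ≤ ‖B n (x n)‖ ^ 2 := by
        nlinarith [hx2 n, norm_nonneg (B n (x n))]
      have h3 := horth' n
      have h4 := hBle n
      have h5 := ht0 n
      have h6 := htle1 n
      nlinarith [sq_nonneg (t n), norm_nonneg (B n), norm_nonneg T, norm_nonneg A,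
        mul_nonneg (sub_nonneg.2 h4) (sq_nonneg (t n))]
    · -- ‖B n‖ < t n ^ 2, so everything is tiny
      have h3 := horth' n
      have h5 := ht0 n
      have h6 := htle1 n
      have h7 : ‖B n‖ ^ 2 ≤ (t n) ^ 2 := by
        nlinarith [mul_nonneg (sub_nonneg.2 hcase.le) (sq_nonneg (t n)),
          mul_nonneg (sub_nonneg.2 hcase.le) (norm_nonneg (B n)),
          mul_nonneg (sq_nonneg (t n)) (sub_nonneg.2 (show t n ^ 2 ≤ 1 by nlinarith))]
      have h8 : (1:ℝ) ≤ C2 := by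
        rw [hC2def]
        nlinarith [norm_nonneg T, norm_nonneg A]
      nlinarith [sq_nonneg (‖B n (x n)‖), h3, h7,
        mul_nonneg (sub_nonneg.2 h8) (sq_nonneg (t n))]
  -- extract convergent subsequence of (T x n, A x n)
  obtain ⟨w, φ, hφ, hSconv⟩ := compact_subseq (isCompactOperator_prod' hT hA) x hx1'
  have hTy : Tendsto (fun k => T (x (φ k))) atTop (𝓝 w.1) :=
    (continuous_fst.tendsto w).comp hSconv
  have hAz : Tendsto (fun k => A (x (φ k))) atTop (𝓝 w.2) :=
    (continuous_snd.tendsto w).comp hSconv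
  obtain ⟨x₀, hx₀norm, hx₀S⟩ := exists_preimage_of_reflexive hrefl (T.prod A)
    (fun k => x (φ k)) (fun k => hx1' (φ k)) hSconv
  have hTx₀ : T x₀ = w.1 := by
    have := congrArg Prod.fst hx₀S
    simpa [ContinuousLinearMap.prod_apply] using this
  have hAx₀ : A x₀ = w.2 := by
    have := congrArg Prod.snd hx₀S
    simpa [ContinuousLinearMap.prod_apply] using this
  have htφ : Tendsto (fun k => t (φ k)) atTop (𝓝 0) := htlim.comp hφ.tendsto_atTop
  -- ‖T x₀‖ = ‖T‖
  have hBconv : Tendsto (fun k => ‖B (φ k) (x (φ k))‖) atTop (𝓝 ‖w.1‖) := by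
    have h1 : Tendsto (fun k => T (x (φ k)) + t (φ k) • A (x (φ k))) atTop (𝓝 (w.1 + (0:ℝ) • w.2)) :=
      hTy.add (htφ.smul hAz)
    rw [zero_smul, add_zero] at h1
    have : (fun k => ‖B (φ k) (x (φ k))‖) = fun k => ‖T (x (φ k)) + t (φ k) • A (x (φ k))‖ := by
      funext k
      rw [hBx]
    rw [this]
    exact h1.norm
  have hw1 : ‖T‖ ≤ ‖w.1‖ := by
    have hg : Tendsto (fun k => ‖B (φ k) (x (φ k))‖ ^ 2 + C1 * t (φ k) + C2 * (t (φ k)) ^ 2)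
        atTop (𝓝 (‖w.1‖ ^ 2 + C1 * 0 + C2 * 0 ^ 2)) := by
      exact ((hBconv.pow 2).add (tendsto_const_nhds.mul htφ)).add
        (tendsto_const_nhds.mul (htφ.pow 2))
    have hge : ‖T‖ ^ 2 ≤ ‖w.1‖ ^ 2 + C1 * 0 + C2 * 0 ^ 2 := by
      refine ge_of_tendsto hg ?_
      filter_upwards with k
      have := hstar (φ k)
      linarith
    nlinarith [norm_nonneg w.1, hTpos]
  have hTnorm : ‖T x₀‖ = ‖T‖ := by
    refine le_antisymm ?_ ?_
    · calc ‖T x₀‖ ≤ ‖T‖ * ‖x₀‖ := T.le_opNorm x₀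
        _ ≤ ‖T‖ * 1 := by nlinarith [hTpos]
        _ = ‖T‖ := mul_one _
    · rw [hTx₀]; exact hw1
  refine ⟨x₀, hx₀norm, hTnorm, ?_⟩
  intro s hs
  rcases eq_or_lt_of_le hs with hs0 | hs0
  · rw [← hs0]
    rw [zero_smul, add_zero, hTnorm]
    nlinarith [norm_nonneg T]
  -- s > 0 case
  have hev : ∀ᶠ k in atTop, t (φ k) ≤ s := by
    filter_upwards [htφ.eventually_lt_const hs0] with k hk using hk.le
  have hptwise : ∀ k, t (φ k) ≤ s →
      ‖T (x (φ k)) + s • A (x (φ k))‖ ^ 2 ≥ ‖T‖ ^ 2 - C1 * s - C2 * s * t (φ k) := by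
    intro k hk
    set n := φ k
    set θ : ℝ := t n / s with hθdef
    have hθ0 : 0 < θ := div_pos (ht0 n) hs0
    have hθ1 : θ ≤ 1 := by
      rw [hθdef, div_le_one hs0]; exact hk
    have hθs : θ * s = t n := div_mul_cancel₀ _ (ne_of_gt hs0)
    set a : ℝ := ‖T (x n)‖
    set b : ℝ := ‖T (x n) + s • A (x n)‖
    set c : ℝ := ‖B n (x n)‖
    have hid : T (x n) + t n • A (x n) = (1 - θ) • T (x n) + θ • (T (x n) + s • A (x n)) := by
      rw [smul_add, smul_smul, hθs, sub_smul, one_smul]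
      abel
    have hca : c ≤ (1 - θ) * a + θ * b := by
      have : c = ‖(1 - θ) • T (x n) + θ • (T (x n) + s • A (x n))‖ := by
        rw [show c = ‖B n (x n)‖ from rfl, hBx, hid]
      rw [this]
      refine le_trans (norm_add_le _ _) ?_
      rw [norm_smul, norm_smul, Real.norm_eq_abs, Real.norm_eq_abs,
        abs_of_nonneg (by linarith : (0:ℝ) ≤ 1 - θ), abs_of_pos hθ0]
    have hstar' : c ^ 2 ≥ ‖T‖ ^ 2 - C1 * t n - C2 * (t n) ^ 2 := hstar n
    have ha : a ≤ ‖T‖ := by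
      calc a ≤ ‖T‖ * ‖x n‖ := T.le_opNorm (x n)
        _ ≤ ‖T‖ * 1 := by nlinarith [hx1' n, hTpos]
        _ = ‖T‖ := mul_one _
    have ha0 : 0 ≤ a := norm_nonneg _
    have hb0 : 0 ≤ b := norm_nonneg _
    have hc0 : 0 ≤ c := norm_nonneg _
    -- c² ≤ (1-θ)a² + θb²
    have hsq : c ^ 2 ≤ (1 - θ) * a ^ 2 + θ * b ^ 2 := by
      nlinarith [sq_nonneg (a - b), mul_nonneg (mul_nonneg hθ0.le (by linarith : (0:ℝ) ≤ 1 - θ)) (sq_nonneg (a - b)), hca, hc0, mul_nonneg (mul_nonneg (by linarith : (0:ℝ) ≤ 1 - θ) ha0) (mul_nonneg hθ0.le hb0)]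
    -- θ b² ≥ θ‖T‖² - C1 t - C2 t²
    have hθb : θ * b ^ 2 ≥ θ * ‖T‖ ^ 2 - C1 * t n - C2 * (t n) ^ 2 := by
      nlinarith [mul_nonneg (by linarith : (0:ℝ) ≤ 1 - θ) (by nlinarith : (0:ℝ) ≤ ‖T‖ ^ 2 - a ^ 2)]
    -- divide by θ
    have : θ * (b ^ 2 - (‖T‖ ^ 2 - C1 * s - C2 * s * t n)) ≥ 0 := by
      have h1 : C1 * (θ * s) = C1 * t n := by rw [hθs]
      have h2 : C2 * s * (θ * t n) = C2 * (t n) ^ 2 := by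
        rw [show θ * t n = t n * θ from mul_comm _ _, ← mul_assoc]
        rw [show C2 * s * t n * θ = C2 * (t n) * (θ * s) from by ring, hθs]
        ring
      linarith [hθb, h1, h2]
    have hb2 : (0:ℝ) ≤ b ^ 2 - (‖T‖ ^ 2 - C1 * s - C2 * s * t n) :=
      le_of_mul_le_mul_left (by linarith [this]) hθ0
    linarith [hb2]
  have hg : Tendsto (fun k => ‖T (x (φ k)) + s • A (x (φ k))‖ ^ 2 + C2 * s * t (φ k))
      atTop (𝓝 (‖T x₀ + s • A x₀‖ ^ 2 + C2 * s * 0)) := by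
    have h1 : Tendsto (fun k => T (x (φ k)) + s • A (x (φ k))) atTop (𝓝 (w.1 + s • w.2)) :=
      hTy.add (hAz.const_smul s)
    rw [hTx₀, hAx₀]
    exact ((h1.norm.pow 2)).add (tendsto_const_nhds.mul htφ)
  have hfin : ‖T‖ ^ 2 - C1 * s ≤ ‖T x₀ + s • A x₀‖ ^ 2 + C2 * s * 0 := by
    refine ge_of_tendsto hg ?_
    filter_upwards [hev] with k hk
    have := hptwise k hk
    linarith
  rw [hC1def] at hfin
  nlinarith [hfin]


end auxiliary

/-- Characterization of `T ⊥_B^ε A` for compact operators on a reflexive Banach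
space whose norm attainment set has the form `D ∪ (-D)` with `D` a nonempty
compact connected subset of the unit sphere, under the extra assumption
`M_T ⊆ M_A`: `T ⊥_B^ε A` iff `Tx ⊥_B^ε Ax` for some `x ∈ M_T`. -/
theorem approx_B_orth_iff_pointwise_of_norm_attainment_symmetric_connected
    {X Y : Type*} [NormedAddCommGroup X] [NormedSpace ℝ X] [CompleteSpace X]
    [NormedAddCommGroup Y] [NormedSpace ℝ Y]
    (hrefl : Function.Surjective (NormedSpace.inclusionInDoubleDual ℝ X))
    (T A : X →L[ℝ] Y) (hT : IsCompactOperator T) (hA : IsCompactOperator A)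
    (D : Set X) (hDne : D.Nonempty) (hDcpt : IsCompact D) (hDconn : IsConnected D)
    (hDsphere : D ⊆ {x : X | ‖x‖ = 1})
    (hMT : {x : X | ‖x‖ = 1 ∧ ‖T x‖ = ‖T‖} = D ∪ (-D))
    (hsubset : {x : X | ‖x‖ = 1 ∧ ‖T x‖ = ‖T‖} ⊆ {x : X | ‖x‖ = 1 ∧ ‖A x‖ = ‖A‖})
    (ε : ℝ) (hε0 : 0 ≤ ε) (hε1 : ε < 1) :
    (∀ l : ℝ, ‖T + l • A‖ ^ 2 ≥ ‖T‖ ^ 2 - 2 * ε * ‖T‖ * ‖l • A‖) ↔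
      ∃ x : X, ‖x‖ = 1 ∧ ‖T x‖ = ‖T‖ ∧
        ∀ l : ℝ, ‖T x + l • A x‖ ^ 2 ≥ ‖T x‖ ^ 2 - 2 * ε * ‖T x‖ * ‖l • A x‖ := by
  constructor
  · intro horth
    by_cases hT0 : ‖T‖ = 0
    · obtain ⟨x, hxD⟩ := hDne
      have hxM : x ∈ {x : X | ‖x‖ = 1 ∧ ‖T x‖ = ‖T‖} := by rw [hMT]; exact Or.inl hxD
      obtain ⟨hx1, hxT⟩ := hxM
      refine ⟨x, hx1, hxT, ?_⟩
      intro l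
      have hTx0 : ‖T x‖ = 0 := by rw [hxT, hT0]
      rw [hTx0]
      nlinarith [sq_nonneg (‖T x + l • A x‖)]
    · have hTpos : 0 < ‖T‖ := lt_of_le_of_ne (norm_nonneg T) (Ne.symm hT0)
      obtain ⟨xp, hxp1, hxpT, hxpW⟩ := key_lemma hrefl T A hT hA ε hε0 horth hTpos
      have hAneg : IsCompactOperator ⇑(-A) := by
        have h := hA.neg
        have : (-⇑A) = ⇑(-A) := by funext v; simp
        rwa [this] at h
      have horthneg : ∀ l : ℝ, ‖T + l • (-A)‖ ^ 2 ≥ ‖T‖ ^ 2 - 2 * ε * ‖T‖ * ‖l • (-A)‖ := by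
        intro l
        have h := horth (-l)
        have he : l • (-A) = (-l) • A := by rw [smul_neg, neg_smul]
        rw [he]
        exact h
      obtain ⟨xm, hxm1, hxmT, hxmW⟩ := key_lemma hrefl T (-A) hT hAneg ε hε0 horthneg hTpos
      have hnorm1 : ∀ z : X, ‖z‖ ≤ 1 → ‖T z‖ = ‖T‖ → ‖z‖ = 1 := by
        intro z hz hTz
        refine le_antisymm hz ?_
        have h := T.le_opNorm z
        rw [hTz] at h
        nlinarith [hTpos]
      set Wp : Set X :=
        {v : X | ∀ s : ℝ, 0 ≤ s → ‖T v + s • A v‖ ^ 2 ≥ ‖T‖ ^ 2 - 2 * ε * ‖T‖ * (s * ‖A‖)}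
        with hWp
      set Wm : Set X :=
        {v : X | ∀ s : ℝ, 0 ≤ s → ‖T v - s • A v‖ ^ 2 ≥ ‖T‖ ^ 2 - 2 * ε * ‖T‖ * (s * ‖A‖)}
        with hWm
      have hWpclosed : IsClosed Wp := by
        have he : Wp = ⋂ (s : ℝ) (_ : 0 ≤ s),
            {v : X | ‖T‖ ^ 2 - 2 * ε * ‖T‖ * (s * ‖A‖) ≤ ‖T v + s • A v‖ ^ 2} := by
          ext v
          simp only [hWp, Set.mem_setOf_eq, Set.mem_iInter, ge_iff_le]
        rw [he]
        exact isClosed_iInter fun s => isClosed_iInter fun hs =>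
          isClosed_le continuous_const (((T.continuous.add (A.continuous.const_smul s)).norm).pow 2)
      have hWmclosed : IsClosed Wm := by
        have he : Wm = ⋂ (s : ℝ) (_ : 0 ≤ s),
            {v : X | ‖T‖ ^ 2 - 2 * ε * ‖T‖ * (s * ‖A‖) ≤ ‖T v - s • A v‖ ^ 2} := by
          ext v
          simp only [hWm, Set.mem_setOf_eq, Set.mem_iInter, ge_iff_le]
        rw [he]
        exact isClosed_iInter fun s => isClosed_iInter fun hs =>
          isClosed_le continuous_const (((T.continuous.sub (A.continuous.const_smul s)).norm).pow 2)
      have hWpneg : ∀ v, v ∈ Wp → -v ∈ Wp := by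
        intro v hv s hs
        have h := hv s hs
        have he : T (-v) + s • A (-v) = -(T v + s • A v) := by
          rw [map_neg, map_neg, smul_neg]
          abel
        rw [he, norm_neg]
        exact h
      have hWmneg : ∀ v, v ∈ Wm → -v ∈ Wm := by
        intro v hv s hs
        have h := hv s hs
        have he : T (-v) - s • A (-v) = -(T v - s • A v) := by
          rw [map_neg, map_neg, smul_neg]
          abel
        rw [he, norm_neg]
        exact h
      -- xp ∈ Wp, xm ∈ Wm
      have hxpWp : xp ∈ Wp := hxpW
      have hxmWm : xm ∈ Wm := by
        intro s hs
        have h := hxmW s hs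
        rw [norm_neg] at h
        have he : T xm + s • (-A) xm = T xm - s • A xm := by
          rw [ContinuousLinearMap.neg_apply, smul_neg, sub_eq_add_neg]
        rwa [he] at h
      -- find representatives in D
      have hxpM : xp ∈ D ∪ (-D) := by
        rw [← hMT]; exact ⟨hnorm1 xp hxp1 hxpT, hxpT⟩
      have hxmM : xm ∈ D ∪ (-D) := by
        rw [← hMT]; exact ⟨hnorm1 xm hxm1 hxmT, hxmT⟩
      have hp : ∃ p ∈ D, p ∈ Wp := by
        rcases hxpM with h | h
        · exact ⟨xp, h, hxpWp⟩
        · exact ⟨-xp, Set.mem_neg.mp h, hWpneg xp hxpWp⟩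
      have hq : ∃ q ∈ D, q ∈ Wm := by
        rcases hxmM with h | h
        · exact ⟨xm, h, hxmWm⟩
        · exact ⟨-xm, Set.mem_neg.mp h, hWmneg xm hxmWm⟩
      obtain ⟨p, hpD, hpW⟩ := hp
      obtain ⟨q, hqD, hqW⟩ := hq
      -- covering
      have hcover : D ⊆ Wp ∪ Wm := by
        intro v hvD
        by_contra hv
        rw [Set.mem_union] at hv
        push_neg at hv
        obtain ⟨hvp, hvm⟩ := hv
        have hvM : v ∈ {x : X | ‖x‖ = 1 ∧ ‖T x‖ = ‖T‖} := by rw [hMT]; exact Or.inl hvD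
        have hvT : ‖T v‖ = ‖T‖ := hvM.2
        simp only [hWp, Set.mem_setOf_eq, not_forall] at hvp
        simp only [hWm, Set.mem_setOf_eq, not_forall] at hvm
        obtain ⟨a, ha0, hva⟩ := hvp
        obtain ⟨b, hb0, hvb⟩ := hvm
        push_neg at hva hvb
        have hapos : 0 < a := by
          rcases lt_or_eq_of_le ha0 with h | h
          · exact h
          · exfalso
            rw [← h] at hva
            simp only [zero_smul, add_zero, zero_mul, mul_zero, sub_zero] at hva
            rw [hvT] at hva
            exact lt_irrefl _ hva
        have hbpos : 0 < b := by
          rcases lt_or_eq_of_le hb0 with h | h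
          · exact h
          · exfalso
            rw [← h] at hvb
            simp only [zero_smul, sub_zero, zero_mul, mul_zero] at hvb
            rw [hvT] at hvb
            exact lt_irrefl _ hvb
        have hPlt : ‖T v + a • A v‖ < ‖T‖ := by
          nlinarith [norm_nonneg (T v + a • A v), hTpos,
            mul_nonneg (mul_nonneg (mul_nonneg (by linarith : (0:ℝ) ≤ 2 * ε) (norm_nonneg T))
              ha0) (norm_nonneg A)]
        have hQlt : ‖T v - b • A v‖ < ‖T‖ := by
          nlinarith [norm_nonneg (T v - b • A v), hTpos,
            mul_nonneg (mul_nonneg (mul_nonneg (by linarith : (0:ℝ) ≤ 2 * ε) (norm_nonneg T))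
              hb0) (norm_nonneg A)]
        have hid : (a + b) • T v = b • (T v + a • A v) + a • (T v - b • A v) := by
          rw [smul_add, smul_sub, smul_smul, smul_smul, add_smul]
          rw [show b * a = a * b from mul_comm b a]
          abel
        have hnle : (a + b) * ‖T v‖ ≤ b * ‖T v + a • A v‖ + a * ‖T v - b • A v‖ := by
          calc (a + b) * ‖T v‖ = ‖(a + b) • T v‖ := by
                rw [norm_smul, Real.norm_eq_abs, abs_of_pos (by linarith)]
            _ ≤ ‖b • (T v + a • A v)‖ + ‖a • (T v - b • A v)‖ := by
                rw [hid]; exact norm_add_le _ _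
            _ = b * ‖T v + a • A v‖ + a * ‖T v - b • A v‖ := by
                rw [norm_smul, norm_smul, Real.norm_eq_abs, Real.norm_eq_abs,
                  abs_of_pos hapos, abs_of_pos hbpos]
        rw [hvT] at hnle
        nlinarith [hnle, hPlt, hQlt, hapos, hbpos]
      -- connectedness
      obtain ⟨z, hzD, hzWp, hzWm⟩ :
          (D ∩ (Wp ∩ Wm)).Nonempty := by
        have h := (isPreconnected_closed_iff.mp hDconn.isPreconnected) Wp Wm
          hWpclosed hWmclosed hcover ⟨p, hpD, hpW⟩ ⟨q, hqD, hqW⟩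
        obtain ⟨z, hz⟩ := h
        exact ⟨z, hz.1, hz.2⟩
      have hzM : z ∈ {x : X | ‖x‖ = 1 ∧ ‖T x‖ = ‖T‖} := by rw [hMT]; exact Or.inl hzD
      have hzA : ‖A z‖ = ‖A‖ := (hsubset hzM).2
      refine ⟨z, hzM.1, hzM.2, ?_⟩
      intro l
      rw [hzM.2]
      have hnl : ‖l • A z‖ = |l| * ‖A‖ := by rw [norm_smul, Real.norm_eq_abs, hzA]
      rw [hnl]
      rcases le_or_gt 0 l with hl | hl
      · have h := hzWp l hl
        rw [abs_of_nonneg hl]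
        linarith [h]
      · have h := hzWm (-l) (by linarith)
        rw [abs_of_neg hl]
        have he : T z - (-l) • A z = T z + l • A z := by
          rw [neg_smul, sub_neg_eq_add]
        rw [he] at h
        linarith [h]
  · rintro ⟨x, hx1, hxT, hxpt⟩ l
    have h1 : ‖T x + l • A x‖ ≤ ‖T + l • A‖ := by
      have h := (T + l • A).le_opNorm x
      simp only [ContinuousLinearMap.add_apply, ContinuousLinearMap.coe_smul',
        Pi.smul_apply] at h
      rw [hx1, mul_one] at h
      exact h
    have h2 : ‖l • A x‖ ≤ ‖l • A‖ := by
      rw [norm_smul l (A x), norm_smul l A]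
      have h := A.le_opNorm x
      rw [hx1, mul_one] at h
      exact mul_le_mul_of_nonneg_left h (norm_nonneg (l : ℝ))
    have h3 := hxpt l
    rw [hxT] at h3
    nlinarith [norm_nonneg (T x + l • A x), norm_nonneg (T + l • A),
      mul_self_le_mul_self (norm_nonneg (T x + l • A x)) h1,
      mul_nonneg (mul_nonneg hε0 (norm_nonneg T)) (sub_nonneg.2 h2)]
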